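/- For every real number 0 < ε < 1, there exists a graph G on some number n₀ ≥ 1 of vertices such that both h_f(G) ≤ ε·n₀ and h_f(Ḡ) ≤ ε·n₀, where Ḡ denotes the complement of G and h_f is the fractional Hadwiger number. Consequently, for every positive integer r, both the complete blow-up G[r] and its complement have Hadwiger number at most ε·r·n₀. -/

import Mathlib

set_option maxHeartbeats 3000000
set_option linter.unusedSectionVars false
set_option linter.unusedVariables false


open Finset

/-- Any two members of a bramble either share a vertex or are joined by an edge,
and each member induces a connected subgraph. -/
def IsBramble {V : Type} (G : SimpleGraph V) (B : Finset (Finset V)) : Prop :=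
  (∀ A ∈ B, (G.induce (A : Set V)).Connected) ∧
    ∀ A ∈ B, ∀ A' ∈ B, (∃ v, v ∈ A ∧ v ∈ A') ∨ ∃ a ∈ A, ∃ b ∈ A', G.Adj a b

/-- A strong bramble: any two (possibly equal) members are joined by an edge. -/
def IsStrongBramble {V : Type} (G : SimpleGraph V) (B : Finset (Finset V)) : Prop :=
  (∀ A ∈ B, (G.induce (A : Set V)).Connected) ∧
    ∀ A ∈ B, ∀ A' ∈ B, ∃ a ∈ A, ∃ b ∈ A', G.Adj a b

/-- A valid weighting: nonnegative weights whose total at every vertex is at most 1. -/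
def IsValidWeight {V : Type} [DecidableEq V] (B : Finset (Finset V)) (w : Finset V → ℝ) : Prop :=
  (∀ A ∈ B, 0 ≤ w A) ∧ ∀ v : V, ∑ A ∈ B.filter (fun A => v ∈ A), w A ≤ 1

/-- The fractional Hadwiger number. -/
noncomputable def fracHadwiger {V : Type} [Fintype V] [DecidableEq V] (G : SimpleGraph V) : ℝ :=
  sSup {h : ℝ | ∃ B : Finset (Finset V), ∃ w : Finset V → ℝ,
    IsBramble G B ∧ IsValidWeight B w ∧ h = ∑ A ∈ B, w A}

/-- The r-integral Hadwiger number: all weights multiples of 1/r. -/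
noncomputable def rIntHadwiger {V : Type} [Fintype V] [DecidableEq V]
    (G : SimpleGraph V) (r : ℕ) : ℝ :=
  sSup {h : ℝ | ∃ B : Finset (Finset V), ∃ w : Finset V → ℝ,
    IsBramble G B ∧ IsValidWeight B w ∧ (∀ A ∈ B, ∃ k : ℕ, w A = k / r) ∧
    h = ∑ A ∈ B, w A}

/-- The lower fractional Hadwiger number (using strong brambles). -/
noncomputable def lowerFracHadwiger {V : Type} [Fintype V] [DecidableEq V]
    (G : SimpleGraph V) : ℝ :=
  sSup {h : ℝ | ∃ B : Finset (Finset V), ∃ w : Finset V → ℝ,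
    IsStrongBramble G B ∧ IsValidWeight B w ∧ h = ∑ A ∈ B, w A}

/-- The lower r-integral Hadwiger number. -/
noncomputable def lowerRIntHadwiger {V : Type} [Fintype V] [DecidableEq V]
    (G : SimpleGraph V) (r : ℕ) : ℝ :=
  sSup {h : ℝ | ∃ B : Finset (Finset V), ∃ w : Finset V → ℝ,
    IsStrongBramble G B ∧ IsValidWeight B w ∧ (∀ A ∈ B, ∃ k : ℕ, w A = k / r) ∧
    h = ∑ A ∈ B, w A}

/-- `G` has a clique minor of order `t`. -/
def HasCliqueMinor {V : Type} (G : SimpleGraph V) (t : ℕ) : Prop :=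
  ∃ f : Fin t → Finset V,
    (∀ i, (f i).Nonempty) ∧
    (∀ i, (G.induce ((f i : Set V))).Connected) ∧
    (∀ i j, i ≠ j → Disjoint (f i) (f j)) ∧
    (∀ i j, i ≠ j → ∃ a ∈ f i, ∃ b ∈ f j, G.Adj a b)

/-- `G` has a clique minor of order `t` and breadth at most `d` (each part has ≤ d vertices). -/
def HasCliqueMinorBreadth {V : Type} (G : SimpleGraph V) (t : ℕ) (d : ℝ) : Prop :=
  ∃ f : Fin t → Finset V,
    (∀ i, (f i).Nonempty) ∧
    (∀ i, (G.induce ((f i : Set V))).Connected) ∧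
    (∀ i j, i ≠ j → Disjoint (f i) (f j)) ∧
    (∀ i j, i ≠ j → ∃ a ∈ f i, ∃ b ∈ f j, G.Adj a b) ∧
    (∀ i, ((f i).card : ℝ) ≤ d)

/-- The Hadwiger number: the largest order of a clique minor. -/
noncomputable def hadwigerNumber {V : Type} (G : SimpleGraph V) : ℕ :=
  sSup {t : ℕ | HasCliqueMinor G t}

/-- The lexicographic product of two graphs. -/
def lexProd {α β : Type} (G : SimpleGraph α) (H : SimpleGraph β) : SimpleGraph (α × β) where
  Adj x y := G.Adj x.1 y.1 ∨ (x.1 = y.1 ∧ H.Adj x.2 y.2)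
  symm := by
    refine ⟨?_⟩
    intro x y hxy
    rcases hxy with h | ⟨h1, h2⟩
    · exact Or.inl h.symm
    · exact Or.inr ⟨h1.symm, h2.symm⟩
  loopless := by
    refine ⟨?_⟩
    intro x hx
    rcases hx with h | ⟨_, h2⟩
    · exact G.ne_of_adj h rfl
    · exact H.ne_of_adj h2 rfl

/-- The complete blow-up `G[r] = G · K_r`. -/
def completeBlowup {α : Type} (G : SimpleGraph α) (r : ℕ) : SimpleGraph (α × Fin r) :=
  lexProd G (⊤ : SimpleGraph (Fin r))

/-- The blow-up `G(r) = G · I_r`. -/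
def emptyBlowup {α : Type} (G : SimpleGraph α) (r : ℕ) : SimpleGraph (α × Fin r) :=
  lexProd G (⊥ : SimpleGraph (Fin r))

/-- `H` is a minor of `G`: branch sets indexed by the vertices of `H`. -/
def IsMinor {W V : Type} (H : SimpleGraph W) (G : SimpleGraph V) : Prop :=
  ∃ f : W → Finset V,
    (∀ u, (G.induce ((f u : Set V))).Connected) ∧
    (∀ u u', u ≠ u' → Disjoint (f u) (f u')) ∧
    (∀ u u', H.Adj u u' → ∃ a ∈ f u, ∃ b ∈ f u', G.Adj a b)

/-- The k × k grid graph. -/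
def gridGraph (k : ℕ) : SimpleGraph (Fin k × Fin k) where
  Adj a b := (a.1 = b.1 ∧ (a.2.val + 1 = b.2.val ∨ b.2.val + 1 = a.2.val)) ∨
             (a.2 = b.2 ∧ (a.1.val + 1 = b.1.val ∨ b.1.val + 1 = a.1.val))
  symm := by
    refine ⟨?_⟩
    intro a b hab
    rcases hab with ⟨h1, h2⟩ | ⟨h1, h2⟩
    · exact Or.inl ⟨h1.symm, h2.symm⟩
    · exact Or.inr ⟨h1.symm, h2.symm⟩
  loopless := by
    refine ⟨?_⟩
    intro a ha
    rcases ha with ⟨_, h | h⟩ | ⟨_, h | h⟩ <;> omega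

/-- Families of disjoint nonempty pairwise-adjacent small sets. -/
def BadFam {V : Type} (G : SimpleGraph V) (s t : ℕ) : Prop :=
  ∃ T : Fin t → Finset V,
    (∀ i, (T i).Nonempty) ∧ (∀ i, (T i).card ≤ s) ∧
    (∀ i j, i ≠ j → Disjoint (T i) (T j)) ∧
    (∀ i j, i ≠ j → ∃ a ∈ T i, ∃ b ∈ T j, G.Adj a b)

variable {V : Type} [Fintype V] [DecidableEq V]

lemma bramble_mem_nonempty {G : SimpleGraph V} {B : Finset (Finset V)}
    (hB : IsBramble G B) {A : Finset V} (hA : A ∈ B) : A.Nonempty := by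
  obtain ⟨⟨x, hx⟩⟩ := (hB.1 A hA).nonempty
  exact ⟨x, by exact_mod_cast hx⟩

/-- double counting: if every member of `B'` meets `U`, total weight is at most `|U|`. -/
lemma sum_weight_le_card {B B' : Finset (Finset V)} {w : Finset V → ℝ}
    (hw : IsValidWeight B w) (hsub : B' ⊆ B) (U : Finset V)
    (hhit : ∀ A ∈ B', ∃ v ∈ U, v ∈ A) :
    ∑ A ∈ B', w A ≤ (U.card : ℝ) := by
  have h1 : ∀ A ∈ B', w A ≤ ∑ v ∈ U, if v ∈ A then w A else 0 := by
    intro A hA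
    obtain ⟨v, hvU, hvA⟩ := hhit A hA
    calc w A = ∑ v ∈ {v}, if v ∈ A then w A else 0 := by simp [hvA]
    _ ≤ ∑ v ∈ U, if v ∈ A then w A else 0 := by
        apply Finset.sum_le_sum_of_subset_of_nonneg (by simpa using hvU)
        intro i _ _
        split <;> [exact hw.1 A (hsub hA); exact le_rfl]
  calc ∑ A ∈ B', w A ≤ ∑ A ∈ B', ∑ v ∈ U, if v ∈ A then w A else 0 :=
        Finset.sum_le_sum h1
    _ = ∑ v ∈ U, ∑ A ∈ B', if v ∈ A then w A else 0 := Finset.sum_comm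
    _ ≤ ∑ v ∈ U, (1 : ℝ) := by
        apply Finset.sum_le_sum
        intro v _
        calc (∑ A ∈ B', if v ∈ A then w A else 0)
            = ∑ A ∈ B'.filter (fun A => v ∈ A), w A := (Finset.sum_filter _ _).symm
          _ ≤ ∑ A ∈ B.filter (fun A => v ∈ A), w A := by
              apply Finset.sum_le_sum_of_subset_of_nonneg
                (Finset.filter_subset_filter _ hsub)
              intro A hA _
              exact hw.1 A (Finset.mem_filter.mp hA).1
          _ ≤ 1 := hw.2 v
    _ = (U.card : ℝ) := by simp

set_option linter.unusedSectionVars false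

/-- Every element of the fracHadwiger set is at most the bound. -/
lemma bramble_weight_le {G : SimpleGraph V} {B : Finset (Finset V)} {w : Finset V → ℝ}
    {s t : ℕ} (ht : 1 ≤ t)
    (hB : IsBramble G B) (hw : IsValidWeight B w) (hbad : ¬ BadFam G s t) :
    ∑ A ∈ B, w A ≤ (s : ℝ) * ((t : ℝ) - 1) + (Fintype.card V : ℝ) / ((s : ℝ) + 1) := by
  classical
  set Small : Finset (Finset V) := B.filter (fun A => A.card ≤ s) with hSmall
  set Big : Finset (Finset V) := B.filter (fun A => ¬ A.card ≤ s) with hBig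
  -- a maximal pairwise-disjoint subfamily of Small
  have hcoll : (Finset.powerset Small).filter
      (fun M => ∀ X ∈ M, ∀ Y ∈ M, X ≠ Y → Disjoint X Y) |>.Nonempty := by
    refine ⟨∅, ?_⟩
    simp
  obtain ⟨M, hMM⟩ := Finset.exists_maximal hcoll
  have hMmem : M ∈ _ := hMM.prop
  have hMmax : ∀ x, (fun x => x ∈ ((Finset.powerset Small).filter
      (fun M => ∀ X ∈ M, ∀ Y ∈ M, X ≠ Y → Disjoint X Y))) x → ¬ M < x :=
    fun x hx hlt => absurd (hMM.2 hx hlt.le) (not_le_of_gt hlt)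
  rw [Finset.mem_filter, Finset.mem_powerset] at hMmem
  obtain ⟨hMsub, hMdisj⟩ := hMmem
  -- M has fewer than t members
  have hMcard : M.card < t := by
    by_contra hge
    push_neg at hge
    obtain ⟨M', hM'sub, hM'card⟩ := Finset.exists_subset_card_eq hge
    apply hbad
    have e : Fin t ≃ {x // x ∈ M'} := (Fintype.equivFinOfCardEq (by simp [hM'card])).symm
    refine ⟨fun i => (e i : Finset V), ?_, ?_, ?_, ?_⟩
    · intro i
      exact bramble_mem_nonempty hB (Finset.mem_of_mem_filter _ (hMsub (hM'sub (e i).2)))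
    · intro i
      have := hMsub (hM'sub (e i).2)
      rw [hSmall, Finset.mem_filter] at this
      exact this.2
    · intro i j hij
      apply hMdisj _ (hM'sub (e i).2) _ (hM'sub (e j).2)
      intro hcon
      exact hij (e.injective (Subtype.ext hcon))
    · intro i j hij
      have hne : (e i : Finset V) ≠ (e j : Finset V) := by
        intro hcon; exact hij (e.injective (Subtype.ext hcon))
      have hdisj := hMdisj _ (hM'sub (e i).2) _ (hM'sub (e j).2) hne
      rcases hB.2 _ (Finset.mem_of_mem_filter _ (hMsub (hM'sub (e i).2)))
        _ (Finset.mem_of_mem_filter _ (hMsub (hM'sub (e j).2))) with ⟨v, hv1, hv2⟩ | h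
      · exact absurd (hdisj (Finset.singleton_subset_iff.mpr hv1)
          (Finset.singleton_subset_iff.mpr hv2)) (by simp)
      · exact h
  -- every small member meets U
  set U : Finset V := M.biUnion id with hU
  have hhit : ∀ A ∈ Small, ∃ v ∈ U, v ∈ A := by
    intro A hA
    by_cases hAM : A ∈ M
    · obtain ⟨v, hv⟩ := bramble_mem_nonempty hB (Finset.mem_of_mem_filter _ hA)
      exact ⟨v, Finset.mem_biUnion.mpr ⟨A, hAM, hv⟩, hv⟩
    · by_contra hno
      push_neg at hno
      have : insert A M ∈ (Finset.powerset Small).filter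
          (fun M => ∀ X ∈ M, ∀ Y ∈ M, X ≠ Y → Disjoint X Y) := by
        rw [Finset.mem_filter, Finset.mem_powerset]
        constructor
        · exact Finset.insert_subset hA hMsub
        · intro X hX Y hY hXY
          have key : ∀ Z ∈ M, Disjoint Z A := by
            intro Z hZ
            rw [Finset.disjoint_right]
            intro v hvA hvZ
            exact hno v (Finset.mem_biUnion.mpr ⟨Z, hZ, hvZ⟩) hvA
          rcases Finset.mem_insert.mp hX with hXA | hX' <;>
            rcases Finset.mem_insert.mp hY with hYA | hY'
          · exact absurd (hXA.trans hYA.symm) hXY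
          · subst hXA; exact (key Y hY').symm
          · subst hYA; exact key X hX'
          · exact hMdisj X hX' Y hY' hXY
      exact hMmax _ this (Finset.ssubset_insert hAM)
  have hUcard : (U.card : ℝ) ≤ (s : ℝ) * ((t : ℝ) - 1) := by
    have h1 : U.card ≤ ∑ A ∈ M, A.card := by
      simpa using Finset.card_biUnion_le (s := M) (t := id)
    have h2 : ∑ A ∈ M, A.card ≤ M.card * s := by
      have hb : ∀ A ∈ M, A.card ≤ s := by
        intro A hA
        have := hMsub hA
        rw [hSmall, Finset.mem_filter] at this
        exact this.2
      simpa [smul_eq_mul] using Finset.sum_le_card_nsmul M (fun A => A.card) s hb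
    have h3 : (M.card : ℝ) ≤ (t : ℝ) - 1 := by
      have : (M.card : ℝ) + 1 ≤ t := by exact_mod_cast hMcard
      linarith
    calc (U.card : ℝ) ≤ (M.card : ℝ) * s := by exact_mod_cast le_trans h1 h2
      _ ≤ ((t:ℝ) - 1) * s := by
          apply mul_le_mul_of_nonneg_right h3 (by positivity)
      _ = (s : ℝ) * ((t : ℝ) - 1) := by ring
  -- small part
  have hsmall_le : ∑ A ∈ Small, w A ≤ (s : ℝ) * ((t : ℝ) - 1) :=
    le_trans (sum_weight_le_card hw (Finset.filter_subset _ _) U hhit) hUcard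
  -- big part
  have hbig_le : ∑ A ∈ Big, w A ≤ (Fintype.card V : ℝ) / ((s : ℝ) + 1) := by
    rw [le_div_iff₀ (by positivity)]
    have h1 : ∑ A ∈ Big, w A * ((s:ℝ) + 1) ≤ ∑ A ∈ Big, w A * (A.card : ℝ) := by
      apply Finset.sum_le_sum
      intro A hA
      rw [hBig, Finset.mem_filter] at hA
      have hcard : (s : ℝ) + 1 ≤ (A.card : ℝ) := by
        have : s + 1 ≤ A.card := by omega
        exact_mod_cast this
      exact mul_le_mul_of_nonneg_left hcard (hw.1 A hA.1)
    have h2 : ∑ A ∈ Big, w A * (A.card : ℝ) ≤ ∑ A ∈ B, w A * (A.card : ℝ) := by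
      apply Finset.sum_le_sum_of_subset_of_nonneg (Finset.filter_subset _ _)
      intro A hA _
      exact mul_nonneg (hw.1 A hA) (by positivity)
    have h3 : ∑ A ∈ B, w A * (A.card : ℝ) ≤ (Fintype.card V : ℝ) := by
      have key : ∀ A ∈ B, w A * (A.card : ℝ) = ∑ v : V, if v ∈ A then w A else 0 := by
        intro A hA
        rw [Finset.sum_ite_mem]
        simp [Finset.univ_inter, Finset.sum_const, mul_comm]
      calc ∑ A ∈ B, w A * (A.card : ℝ) = ∑ A ∈ B, ∑ v : V, if v ∈ A then w A else 0 :=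
            Finset.sum_congr rfl key
        _ = ∑ v : V, ∑ A ∈ B, if v ∈ A then w A else 0 := Finset.sum_comm
        _ ≤ ∑ v : V, (1:ℝ) := by
            apply Finset.sum_le_sum
            intro v _
            rw [← Finset.sum_filter]
            exact hw.2 v
        _ = (Fintype.card V : ℝ) := by simp
    calc (∑ A ∈ Big, w A) * ((s:ℝ)+1) = ∑ A ∈ Big, w A * ((s:ℝ)+1) := by
          rw [Finset.sum_mul]
      _ ≤ (Fintype.card V : ℝ) := le_trans h1 (le_trans h2 h3)
  calc ∑ A ∈ B, w A = ∑ A ∈ Small, w A + ∑ A ∈ Big, w A :=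
        (Finset.sum_filter_add_sum_filter_not _ _ _).symm
    _ ≤ _ := add_le_add hsmall_le hbig_le

lemma fracHadwiger_le_of_no_bad {G : SimpleGraph V} {s t : ℕ} (ht : 1 ≤ t)
    (hbad : ¬ BadFam G s t) :
    fracHadwiger G ≤ (s : ℝ) * ((t : ℝ) - 1) + (Fintype.card V : ℝ) / ((s : ℝ) + 1) := by
  apply Real.sSup_le
  · rintro x ⟨B, w, hB, hw, rfl⟩
    exact bramble_weight_le ht hB hw hbad
  · have h1 : (0:ℝ) ≤ (s : ℝ) * ((t : ℝ) - 1) := by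
      apply mul_nonneg (by positivity)
      have : (1:ℝ) ≤ t := by exact_mod_cast ht
      linarith
    positivity

lemma fracHadwiger_bddAbove (G : SimpleGraph V) :
    BddAbove {h : ℝ | ∃ B : Finset (Finset V), ∃ w : Finset V → ℝ,
      IsBramble G B ∧ IsValidWeight B w ∧ h = ∑ A ∈ B, w A} := by
  refine ⟨(Fintype.card V : ℝ), ?_⟩
  rintro x ⟨B, w, hB, hw, rfl⟩
  have := sum_weight_le_card hw (le_refl B) Finset.univ ?_
  · simpa using this
  · intro A hA
    obtain ⟨v, hv⟩ := bramble_mem_nonempty hB hA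
    exact ⟨v, Finset.mem_univ v, hv⟩

namespace Counting

/-- classical count of satisfying assignments -/
noncomputable def cnt {α : Type} [Fintype α] (P : α → Prop) : ℕ :=
  @Finset.card _ (@Finset.filter _ P (Classical.decPred P) Finset.univ)

lemma mem_cnt_filter {α : Type} [Fintype α] {P : α → Prop} {x : α} :
    x ∈ @Finset.filter _ P (Classical.decPred P) Finset.univ ↔ P x := by
  letI := Classical.decPred P
  rw [Finset.mem_filter]
  simp

lemma cnt_congr {α : Type} [Fintype α] {P Q : α → Prop} (h : ∀ a, P a ↔ Q a) :
    cnt P = cnt Q := by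
  unfold cnt
  congr 1
  ext x
  rw [mem_cnt_filter, mem_cnt_filter, h x]

lemma cnt_eq_card_filter {α : Type} [Fintype α] (P : α → Prop) [DecidablePred P] :
    cnt P = (Finset.univ.filter P).card := by
  unfold cnt
  congr 1
  ext x
  rw [mem_cnt_filter, Finset.mem_filter]
  simp

variable {C : Type} [Fintype C] [DecidableEq C]

/-- merging two functions along a set of coordinates -/
def merge (S : Finset C) (u v : C → Bool) : C → Bool := fun c => if c ∈ S then u c else v c

lemma merge_merge₁ (S : Finset C) (f g : C → Bool) :
    merge S (merge S f g) (merge S g f) = f := by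
  funext c
  by_cases h : c ∈ S <;> simp [merge, h]

/-- Independence of events with disjoint supports, counting version. -/
lemma card_filter_and_mul (S : Finset C) (P Q : (C → Bool) → Prop)
    (hP : ∀ f g : C → Bool, (∀ c ∈ S, f c = g c) → (P f ↔ P g))
    (hQ : ∀ f g : C → Bool, (∀ c ∉ S, f c = g c) → (Q f ↔ Q g)) :
    cnt (fun f => P f ∧ Q f) * 2 ^ (Fintype.card C) = cnt P * cnt Q := by
  classical
  unfold cnt
  have key : ((@Finset.filter _ (fun f => P f ∧ Q f) (Classical.decPred _) Finset.univ)
        ×ˢ (Finset.univ : Finset (C → Bool))).card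
      = ((@Finset.filter _ P (Classical.decPred _) Finset.univ)
        ×ˢ (@Finset.filter _ Q (Classical.decPred _) Finset.univ)).card := by
    refine Finset.card_bij' (i := fun p _ => (merge S p.1 p.2, merge S p.2 p.1))
      (j := fun q _ => (merge S q.1 q.2, merge S q.2 q.1)) ?_ ?_ ?_ ?_
    · rintro ⟨f, g⟩ hp
      rw [Finset.mem_product] at hp ⊢
      rw [mem_cnt_filter] at hp
      rw [mem_cnt_filter, mem_cnt_filter]
      obtain ⟨⟨hPf, hQf⟩, -⟩ := hp
      constructor
      · exact (hP (merge S f g) f (fun c hc => by simp [merge, hc])).mpr hPf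
      · exact (hQ (merge S g f) f (fun c hc => by simp [merge, hc])).mpr hQf
    · rintro ⟨p, q⟩ hq
      rw [Finset.mem_product] at hq ⊢
      rw [mem_cnt_filter, mem_cnt_filter] at hq
      rw [mem_cnt_filter]
      obtain ⟨hPp, hQq⟩ := hq
      refine ⟨⟨?_, ?_⟩, Finset.mem_univ _⟩
      · exact (hP (merge S p q) p (fun c hc => by simp [merge, hc])).mpr hPp
      · exact (hQ (merge S p q) q (fun c hc => by simp [merge, hc])).mpr hQq
    · rintro ⟨f, g⟩ _
      simp only [Prod.mk.injEq]
      exact ⟨merge_merge₁ S f g, merge_merge₁ S g f⟩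
    · rintro ⟨p, q⟩ _
      simp only [Prod.mk.injEq]
      exact ⟨merge_merge₁ S p q, merge_merge₁ S q p⟩
  rw [Finset.card_product, Finset.card_product] at key
  simpa [Finset.card_univ, Fintype.card_fun] using key

/-- Product formula for finitely many events with pairwise disjoint supports. -/
lemma card_filter_forall_mul {ι : Type} [DecidableEq ι]
    (pairs : Finset ι) (Z : ι → Finset C) (P : ι → (C → Bool) → Prop)
    (hdisj : ∀ i ∈ pairs, ∀ j ∈ pairs, i ≠ j → Disjoint (Z i) (Z j))
    (hsupp : ∀ i ∈ pairs, ∀ f g : C → Bool, (∀ c ∈ Z i, f c = g c) → (P i f ↔ P i g)) :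
    cnt (fun f => ∀ i ∈ pairs, P i f) * (2 ^ (Fintype.card C)) ^ pairs.card
      = (∏ i ∈ pairs, cnt (P i)) * 2 ^ (Fintype.card C) := by
  classical
  induction pairs using Finset.induction_on with
  | empty =>
    have h0 : cnt (fun f : C → Bool => ∀ i ∈ (∅ : Finset ι), P i f) = 2 ^ Fintype.card C := by
      rw [cnt_congr (Q := fun _ => True) (by simp)]
      rw [cnt_eq_card_filter]
      simp [Finset.filter_true_of_mem, Finset.card_univ, Fintype.card_fun]
    rw [h0]
    simp
  | @insert a s ha ih =>
    have hsplit : cnt (fun f : C → Bool => ∀ i ∈ insert a s, P i f)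
        = cnt (fun f : C → Bool => P a f ∧ ∀ i ∈ s, P i f) :=
      cnt_congr (fun f => by simp [Finset.forall_mem_insert])
    have hmerge := card_filter_and_mul (Z a) (P a) (fun f => ∀ i ∈ s, P i f)
      (hsupp a (Finset.mem_insert_self a s))
      (by
        intro f g hfg
        apply forall₂_congr
        intro i hi
        apply hsupp i (Finset.mem_insert_of_mem hi)
        intro c hc
        apply hfg
        intro hcZa
        exact Finset.disjoint_left.mp
          (hdisj i (Finset.mem_insert_of_mem hi) a (Finset.mem_insert_self a s)
            (fun h => ha (h ▸ hi))) hc hcZa)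
    have ihs := ih
      (fun i hi j hj hij => hdisj i (Finset.mem_insert_of_mem hi) j (Finset.mem_insert_of_mem hj) hij)
      (fun i hi => hsupp i (Finset.mem_insert_of_mem hi))
    rw [hsplit, Finset.card_insert_of_notMem ha, Finset.prod_insert ha, pow_succ]
    calc cnt (fun f : C → Bool => P a f ∧ ∀ i ∈ s, P i f)
          * ((2 ^ Fintype.card C) ^ s.card * 2 ^ Fintype.card C)
        = (cnt (fun f : C → Bool => P a f ∧ ∀ i ∈ s, P i f) * 2 ^ Fintype.card C)
          * (2 ^ Fintype.card C) ^ s.card := by ring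
      _ = (cnt (P a) * cnt (fun f : C → Bool => ∀ i ∈ s, P i f))
          * (2 ^ Fintype.card C) ^ s.card := by rw [hmerge]
      _ = cnt (P a)
          * (cnt (fun f : C → Bool => ∀ i ∈ s, P i f) * (2 ^ Fintype.card C) ^ s.card) := by
          ring
      _ = cnt (P a) * ((∏ i ∈ s, cnt (P i)) * 2 ^ Fintype.card C) := by rw [ihs]
      _ = cnt (P a) * (∏ i ∈ s, cnt (P i)) * 2 ^ Fintype.card C := by ring

/-- number of functions prescribed on a finite set of coordinates -/
lemma card_filter_fixed (Z : Finset C) (v : Bool) :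
    cnt (fun f : C → Bool => ∀ c ∈ Z, f c = v) = 2 ^ (Fintype.card C - Z.card) := by
  classical
  rw [cnt_eq_card_filter]
  have key : (Finset.univ.filter (fun f : C → Bool => ∀ c ∈ Z, f c = v)).card
      = (Finset.univ : Finset ({c : C // c ∉ Z} → Bool)).card := by
    refine Finset.card_bij' (i := fun f _ => fun c => f c.1)
      (j := fun g _ => fun c => if hc : c ∈ Z then v else g ⟨c, hc⟩) ?_ ?_ ?_ ?_
    · intro f _; exact Finset.mem_univ _
    · intro g _
      simp only [Finset.mem_filter, Finset.mem_univ, true_and]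
      intro c hc
      simp [hc]
    · intro f hf
      simp only [Finset.mem_filter, Finset.mem_univ, true_and] at hf
      funext c
      by_cases hc : c ∈ Z
      · simp [hc, hf c hc]
      · simp [hc]
    · intro g _
      funext c
      simp [c.2]
  rw [key, Finset.card_univ, Fintype.card_fun]
  congr 1
  simp [Fintype.card_subtype_compl]

lemma card_filter_le_of_fixed_not (Z : Finset C) (v : Bool) (E : (C → Bool) → Prop)
    (hE : ∀ f : C → Bool, (∀ c ∈ Z, f c = v) → ¬ E f) :
    cnt E ≤ 2 ^ (Fintype.card C) - 2 ^ (Fintype.card C - Z.card) := by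
  classical
  have hfix := card_filter_fixed Z v
  rw [cnt_eq_card_filter] at hfix
  unfold cnt
  have hsub : @Finset.filter _ E (Classical.decPred E) Finset.univ
      ⊆ Finset.univ \ Finset.univ.filter (fun f : C → Bool => ∀ c ∈ Z, f c = v) := by
    intro f hf
    rw [Finset.mem_sdiff]
    refine ⟨Finset.mem_univ _, ?_⟩
    rw [Finset.mem_filter]
    rintro ⟨-, hfixf⟩
    exact hE f hfixf (mem_cnt_filter.mp hf)
  calc (@Finset.filter _ E (Classical.decPred E) Finset.univ).card
      ≤ (Finset.univ \ Finset.univ.filter (fun f : C → Bool => ∀ c ∈ Z, f c = v)).card :=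
        Finset.card_le_card hsub
    _ = 2 ^ (Fintype.card C) - 2 ^ (Fintype.card C - Z.card) := by
        rw [Finset.card_sdiff_of_subset (Finset.filter_subset _ _ |>.trans (by simp))]
        rw [hfix, Finset.card_univ, Fintype.card_fun]
        simp

end Counting
section Model
open Counting

variable {n : ℕ}

/-- the graph encoded by an edge-indicator function -/
def graphOf (f : (Fin n × Fin n) → Bool) : SimpleGraph (Fin n) where
  Adj a b := a ≠ b ∧ (f (a, b) = true ∨ f (b, a) = true)
  symm := by
    refine ⟨?_⟩
    rintro a b ⟨h1, h2⟩
    exact ⟨h1.symm, h2.symm⟩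
  loopless := ⟨fun a h => h.1 rfl⟩

lemma graphOf_adj (f : (Fin n × Fin n) → Bool) (a b : Fin n) :
    (graphOf f).Adj a b ↔ a ≠ b ∧ (f (a, b) = true ∨ f (b, a) = true) := Iff.rfl

lemma graphOf_compl_adj (f : (Fin n × Fin n) → Bool) (a b : Fin n) :
    (graphOf f)ᶜ.Adj a b ↔ a ≠ b ∧ (f (a, b) = false ∧ f (b, a) = false) := by
  rw [SimpleGraph.compl_adj]
  constructor
  · rintro ⟨hne, hnadj⟩
    refine ⟨hne, ?_, ?_⟩
    · cases h1 : f (a, b)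
      · rfl
      · exact absurd ⟨hne, Or.inl h1⟩ hnadj
    · cases h2 : f (b, a)
      · rfl
      · exact absurd ⟨hne, Or.inr h2⟩ hnadj
  · rintro ⟨hne, h1, h2⟩
    refine ⟨hne, ?_⟩
    rintro ⟨-, h | h⟩
    · rw [h1] at h; exact Bool.false_ne_true h
    · rw [h2] at h; exact Bool.false_ne_true h

/-- the set of coordinates between two vertex sets -/
def zone (A B : Finset (Fin n)) : Finset (Fin n × Fin n) := (A ×ˢ B) ∪ (B ×ˢ A)

lemma zone_card_le {A B : Finset (Fin n)} {s : ℕ} (hA : A.card ≤ s) (hB : B.card ≤ s) :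
    (zone A B).card ≤ 2 * s * s := by
  calc (zone A B).card ≤ (A ×ˢ B).card + (B ×ˢ A).card := Finset.card_union_le _ _
    _ = A.card * B.card + B.card * A.card := by rw [Finset.card_product, Finset.card_product]
    _ ≤ s * s + s * s := by
        have h1 := Nat.mul_le_mul hA hB
        have h2 := Nat.mul_le_mul hB hA
        omega
    _ = 2 * s * s := by ring

/-- event: the two sets are joined (pol = true: in `graphOf f`, false: in complement) -/
def Epair (pol : Bool) (A B : Finset (Fin n)) (f : (Fin n × Fin n) → Bool) : Prop :=
  ∃ a ∈ A, ∃ b ∈ B, a ≠ b ∧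
    (if pol then (f (a, b) = true ∨ f (b, a) = true)
     else (f (a, b) = false ∧ f (b, a) = false))

instance (pol : Bool) (A B : Finset (Fin n)) : DecidablePred (Epair pol A B) := by
  intro f
  unfold Epair
  infer_instance

lemma Epair_supp (pol : Bool) (A B : Finset (Fin n)) (f g : (Fin n × Fin n) → Bool)
    (hfg : ∀ c ∈ zone A B, f c = g c) : Epair pol A B f ↔ Epair pol A B g := by
  have hab : ∀ a ∈ A, ∀ b ∈ B, f (a, b) = g (a, b) ∧ f (b, a) = g (b, a) := by
    intro a ha b hb
    constructor
    · exact hfg (a, b) (Finset.mem_union_left _ (Finset.mem_product.mpr ⟨ha, hb⟩))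
    · exact hfg (b, a) (Finset.mem_union_right _ (Finset.mem_product.mpr ⟨hb, ha⟩))
  unfold Epair
  apply exists_congr; intro a
  apply and_congr_right; intro ha
  apply exists_congr; intro b
  apply and_congr_right; intro hb
  apply and_congr_right; intro _
  rw [(hab a ha b hb).1, (hab a ha b hb).2]

lemma Epair_not_of_fixed (pol : Bool) (A B : Finset (Fin n)) (f : (Fin n × Fin n) → Bool)
    (hfix : ∀ c ∈ zone A B, f c = !pol) : ¬ Epair pol A B f := by
  rintro ⟨a, ha, b, hb, -, h⟩
  have h1 : f (a, b) = !pol := hfix _ (Finset.mem_union_left _ (Finset.mem_product.mpr ⟨ha, hb⟩))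
  have h2 : f (b, a) = !pol := hfix _ (Finset.mem_union_right _ (Finset.mem_product.mpr ⟨hb, ha⟩))
  cases pol
  · simp only [if_neg Bool.false_ne_true] at h
    rw [h1, h2] at h
    simp at h
  · simp only [if_pos] at h
    rw [h1, h2] at h
    simp at h

/-- zones of distinct ordered pairs (with increasing coordinates) are disjoint -/
lemma zone_disjoint {t : ℕ} (W : Fin t → Finset (Fin n))
    (hW : ∀ i j, i ≠ j → Disjoint (W i) (W j)) {p q : Fin t × Fin t}
    (hp : p.1 < p.2) (hq : q.1 < q.2) (hpq : p ≠ q) :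
    Disjoint (zone (W p.1) (W p.2)) (zone (W q.1) (W q.2)) := by
  have key : ∀ x y (a : Fin n), a ∈ W x → a ∈ W y → x = y := by
    intro x y a hx hy
    by_contra h
    exact Finset.disjoint_left.mp (hW x y h) hx hy
  rw [Finset.disjoint_left]
  rintro ⟨a, b⟩ h1 h2
  rw [zone, Finset.mem_union, Finset.mem_product, Finset.mem_product] at h1 h2
  rcases h1 with ⟨ha1, hb1⟩ | ⟨ha1, hb1⟩ <;> rcases h2 with ⟨ha2, hb2⟩ | ⟨ha2, hb2⟩
  · exact hpq (Prod.ext (key _ _ a ha1 ha2) (key _ _ b hb1 hb2))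
  · have e1 := key _ _ a ha1 ha2
    have e2 := key _ _ b hb1 hb2
    rw [e1] at hp
    rw [← e2] at hq
    exact absurd (hp.trans hq) (lt_irrefl _)
  · have e1 := key _ _ a ha1 ha2
    have e2 := key _ _ b hb1 hb2
    rw [e2] at hp
    rw [← e1] at hq
    exact absurd (hp.trans hq) (lt_irrefl _)
  · exact hpq (Prod.ext (key _ _ b hb1 hb2) (key _ _ a ha1 ha2))

/-- the set of ordered pairs with increasing coordinates -/
def pairsF (t : ℕ) : Finset (Fin t × Fin t) :=
  Finset.univ.filter (fun p => p.1 < p.2)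

lemma pairsF_card (t : ℕ) : 2 * (pairsF t).card = t * t - t := by
  classical
  have hswap : (pairsF t).card
      = (Finset.univ.filter (fun p : Fin t × Fin t => p.2 < p.1)).card := by
    refine Finset.card_bij' (i := fun p _ => Prod.swap p) (j := fun p _ => Prod.swap p)
      ?_ ?_ ?_ ?_
    · rintro ⟨a, b⟩ hp
      simp only [pairsF, Finset.mem_filter, Finset.mem_univ, true_and] at hp ⊢
      exact hp
    · rintro ⟨a, b⟩ hp
      simp only [pairsF, Finset.mem_filter, Finset.mem_univ, true_and] at hp ⊢
      exact hp
    · rintro ⟨a, b⟩ _; rfl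
    · rintro ⟨a, b⟩ _; rfl
  have hunion : (pairsF t) ∪ (Finset.univ.filter (fun p : Fin t × Fin t => p.2 < p.1))
      = (Finset.univ : Finset (Fin t)).offDiag := by
    ext ⟨a, b⟩
    simp only [pairsF, Finset.mem_union, Finset.mem_filter, Finset.mem_univ, true_and,
      Finset.mem_offDiag]
    constructor
    · rintro (h | h)
      · exact ne_of_lt h
      · exact (ne_of_lt h).symm
    · intro h
      rcases lt_or_gt_of_ne h with h' | h'
      · exact Or.inl h'
      · exact Or.inr h'
  have hdisj : Disjoint (pairsF t)
      (Finset.univ.filter (fun p : Fin t × Fin t => p.2 < p.1)) := by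
    rw [Finset.disjoint_left]
    rintro ⟨a, b⟩ h1 h2
    simp only [pairsF, Finset.mem_filter, Finset.mem_univ, true_and] at h1 h2
    exact absurd (h1.trans h2) (lt_irrefl _)
  have := Finset.card_union_of_disjoint hdisj
  rw [hunion, Finset.offDiag_card, Finset.card_univ, Fintype.card_fin] at this
  omega

end Model

section Witness

/-- encoding of a small set as a padded tuple -/
noncomputable def setCode (n s : ℕ) (S : Finset (Fin n)) : Fin s → Fin (n + 1) :=
  fun k => if h : (k : ℕ) < S.card
    then Fin.castSucc ((S.equivFin.symm ⟨k, h⟩ : {x // x ∈ S}) : Fin n)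
    else Fin.last n

lemma setCode_spec {n s : ℕ} (S : Finset (Fin n)) (hS : S.card ≤ s) (x : Fin n) :
    x ∈ S ↔ ∃ k : Fin s, setCode n s S k = Fin.castSucc x := by
  constructor
  · intro hx
    set i : Fin S.card := S.equivFin ⟨x, hx⟩ with hi
    refine ⟨⟨i, lt_of_lt_of_le i.2 hS⟩, ?_⟩
    rw [setCode, dif_pos (show ((⟨i, lt_of_lt_of_le i.2 hS⟩ : Fin s) : ℕ) < S.card from i.2)]
    congr 1
    have : (⟨(⟨(i : ℕ), lt_of_lt_of_le i.2 hS⟩ : Fin s), i.2⟩ : Fin S.card) = i := rfl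
    rw [this, hi, Equiv.symm_apply_apply]
  · rintro ⟨k, hk⟩
    rw [setCode] at hk
    split at hk
    · have := Fin.castSucc_injective n hk
      rw [← this]
      exact (S.equivFin.symm _).2
    · exact absurd hk.symm (ne_of_lt (Fin.castSucc_lt_last x))

lemma card_smallSets_le (n s : ℕ) :
    ((Finset.univ : Finset (Finset (Fin n))).filter (fun S => S.card ≤ s)).card
      ≤ (n + 1) ^ s := by
  classical
  have hinj : Set.InjOn (setCode n s)
      ((Finset.univ : Finset (Finset (Fin n))).filter (fun S => S.card ≤ s)) := by
    intro S hS T hT hST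
    simp only [Finset.coe_filter, Set.mem_setOf_eq, Finset.mem_univ, true_and] at hS hT
    ext x
    rw [setCode_spec S hS x, setCode_spec T hT x, hST]
  calc ((Finset.univ : Finset (Finset (Fin n))).filter (fun S => S.card ≤ s)).card
      ≤ (Finset.univ : Finset (Fin s → Fin (n + 1))).card :=
        Finset.card_le_card_of_injOn _ (fun _ _ => Finset.mem_univ _) hinj
    _ = (n + 1) ^ s := by
        rw [Finset.card_univ, Fintype.card_fun]
        simp

end Witness


section Defs

/-- the family of potential witnesses -/
def Wfam (n s t : ℕ) : Finset (Fin t → Finset (Fin n)) :=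
  Finset.univ.filter (fun W =>
    (∀ i, (W i).Nonempty) ∧ (∀ i, (W i).card ≤ s) ∧ (∀ i j, i ≠ j → Disjoint (W i) (W j)))

lemma Wfam_card_le (n s t : ℕ) : (Wfam n s t).card ≤ ((n + 1) ^ s) ^ t := by
  classical
  have hsub : Wfam n s t ⊆ Fintype.piFinset (fun _ : Fin t =>
      (Finset.univ : Finset (Finset (Fin n))).filter (fun S => S.card ≤ s)) := by
    intro W hW
    rw [Wfam, Finset.mem_filter] at hW
    rw [Fintype.mem_piFinset]
    intro i
    rw [Finset.mem_filter]
    exact ⟨Finset.mem_univ _, hW.2.2.1 i⟩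
  calc (Wfam n s t).card ≤ _ := Finset.card_le_card hsub
    _ = ∏ _i : Fin t, ((Finset.univ : Finset (Finset (Fin n))).filter
        (fun S => S.card ≤ s)).card := Fintype.card_piFinset _
    _ ≤ ∏ _i : Fin t, (n + 1) ^ s := Finset.prod_le_prod' (fun _ _ => card_smallSets_le n s)
    _ = ((n + 1) ^ s) ^ t := by simp

/-- all pairs of a witness joined appropriately -/
def EAll (pol : Bool) {n t : ℕ} (s : ℕ) (W : Fin t → Finset (Fin n))
    (f : (Fin n × Fin n) → Bool) : Prop :=
  ∀ p ∈ pairsF t, Epair pol (W p.1) (W p.2) f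

instance (pol : Bool) {n t : ℕ} (s : ℕ) (W : Fin t → Finset (Fin n)) :
    DecidablePred (EAll pol s W) := by
  intro f
  unfold EAll
  infer_instance


end Defs

section MainCount
open Counting

lemma card_EAll_le {n s t : ℕ} (hn : 2 * s * s ≤ n * n) (pol : Bool)
    {W : Fin t → Finset (Fin n)} (hW : W ∈ Wfam n s t) :
    cnt (EAll pol s W) * (2 ^ (n * n)) ^ (pairsF t).card
      ≤ (2 ^ (n * n) - 2 ^ (n * n - 2 * s * s)) ^ (pairsF t).card * 2 ^ (n * n) := by
  classical
  rw [Wfam, Finset.mem_filter] at hW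
  obtain ⟨-, hne, hcard, hdisj⟩ := hW
  have hC : Fintype.card (Fin n × Fin n) = n * n := by simp
  have hprod := card_filter_forall_mul (C := Fin n × Fin n) (pairsF t)
    (fun p => zone (W p.1) (W p.2)) (fun p => Epair pol (W p.1) (W p.2))
    (by
      intro p hp q hq hpq
      simp only [pairsF, Finset.mem_filter, Finset.mem_univ, true_and] at hp hq
      exact zone_disjoint W hdisj hp hq hpq)
    (fun p _ f g hfg => Epair_supp pol _ _ f g hfg)
  rw [hC] at hprod
  beta_reduce at hprod
  have hEAll : cnt (EAll pol s W)
      = cnt (fun f => ∀ i ∈ pairsF t, Epair pol (W i.1) (W i.2) f) :=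
    cnt_congr (fun f => Iff.rfl)
  rw [hEAll, hprod]
  have hfac : ∀ p ∈ pairsF t,
      cnt (Epair pol (W p.1) (W p.2)) ≤ 2 ^ (n * n) - 2 ^ (n * n - 2 * s * s) := by
    intro p _
    have h1 := card_filter_le_of_fixed_not (zone (W p.1) (W p.2)) (!pol)
      (Epair pol (W p.1) (W p.2)) (fun f hfix => Epair_not_of_fixed pol _ _ f hfix)
    rw [hC] at h1
    refine le_trans h1 ?_
    have hz : (zone (W p.1) (W p.2)).card ≤ 2 * s * s :=
      zone_card_le (hcard p.1) (hcard p.2)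
    have h2 : 2 ^ (n * n - 2 * s * s) ≤ 2 ^ (n * n - (zone (W p.1) (W p.2)).card) :=
      Nat.pow_le_pow_right (by norm_num) (by omega)
    omega
  apply Nat.mul_le_mul_right
  calc ∏ p ∈ pairsF t, cnt (Epair pol (W p.1) (W p.2))
      ≤ ∏ _p ∈ pairsF t, (2 ^ (n * n) - 2 ^ (n * n - 2 * s * s)) :=
        Finset.prod_le_prod' hfac
    _ = (2 ^ (n * n) - 2 ^ (n * n - 2 * s * s)) ^ (pairsF t).card := by
        rw [Finset.prod_const]

theorem exists_no_bad (n s t : ℕ) (hn : 2 * s * s ≤ n * n)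
    (hreal : 2 * (((n : ℝ) + 1) ^ (s * t))
        * (1 - ((2 : ℝ) ^ (2 * s * s))⁻¹) ^ (pairsF t).card < 1) :
    ∃ G : SimpleGraph (Fin n), ¬ BadFam G s t ∧ ¬ BadFam Gᶜ s t := by
  classical
  set K := (pairsF t).card with hK
  set Q := 2 ^ (n * n) with hQ
  set D := 2 ^ (n * n) - 2 ^ (n * n - 2 * s * s) with hD
  set Bad : ((Fin n × Fin n) → Bool) → Prop :=
    fun f => BadFam (graphOf f) s t ∨ BadFam (graphOf f)ᶜ s t with hBad
  -- union bound
  have hsubset : (@Finset.filter _ Bad (Classical.decPred Bad) Finset.univ)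
      ⊆ ((Wfam n s t).biUnion (fun W =>
            @Finset.filter _ (EAll true s W) (Classical.decPred _) Finset.univ))
        ∪ ((Wfam n s t).biUnion (fun W =>
            @Finset.filter _ (EAll false s W) (Classical.decPred _) Finset.univ)) := by
    intro f hf
    have hBadf := mem_cnt_filter.mp hf
    rw [Finset.mem_union, Finset.mem_biUnion, Finset.mem_biUnion]
    have key : ∀ (pol : Bool) (G : SimpleGraph (Fin n)),
        (∀ a b, G.Adj a b → Epair pol ({a} : Finset (Fin n)) ({b} : Finset (Fin n)) f) →
        BadFam G s t → ∃ W ∈ Wfam n s t, f ∈ @Finset.filter _ (EAll pol s W)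
          (Classical.decPred _) Finset.univ := by
      rintro pol G hGE ⟨T, hTne, hTcard, hTdisj, hTadj⟩
      refine ⟨T, ?_, ?_⟩
      · rw [Wfam, Finset.mem_filter]
        exact ⟨Finset.mem_univ _, hTne, hTcard, hTdisj⟩
      · rw [mem_cnt_filter]
        intro p hp
        rw [pairsF, Finset.mem_filter] at hp
        have hne : p.1 ≠ p.2 := Fin.ne_of_lt hp.2
        obtain ⟨a, ha, b, hb, hab⟩ := hTadj p.1 p.2 hne
        obtain ⟨a', ha', b', hb', hcond⟩ := hGE a b hab
        rw [Finset.mem_singleton] at ha' hb'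
        rw [ha', hb'] at hcond
        exact ⟨a, ha, b, hb, hcond⟩
    rcases hBadf with h | h
    · refine Or.inl (key true (graphOf f) ?_ h)
      intro a b hab
      obtain ⟨hne, hor⟩ := hab
      exact ⟨a, Finset.mem_singleton_self a, b, Finset.mem_singleton_self b, hne, by
        simpa using hor⟩
    · refine Or.inr (key false (graphOf f)ᶜ ?_ h)
      intro a b hab
      rw [graphOf_compl_adj] at hab
      obtain ⟨hne, h1, h2⟩ := hab
      exact ⟨a, Finset.mem_singleton_self a, b, Finset.mem_singleton_self b, hne, by
        simp [h1, h2]⟩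
  -- counting
  have hcount : cnt Bad * Q ^ K ≤ 2 * (Wfam n s t).card * (D ^ K * Q) := by
    have h1 : cnt Bad ≤ (∑ W ∈ Wfam n s t, cnt (EAll true s W))
        + (∑ W ∈ Wfam n s t, cnt (EAll false s W)) := by
      calc cnt Bad ≤ _ := Finset.card_le_card hsubset
        _ ≤ _ := Finset.card_union_le _ _
        _ ≤ _ := by
            apply add_le_add <;>
              exact Finset.card_biUnion_le
    have h2 : ∀ pol : Bool, (∑ W ∈ Wfam n s t, cnt (EAll pol s W)) * Q ^ K
        ≤ (Wfam n s t).card * (D ^ K * Q) := by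
      intro pol
      rw [Finset.sum_mul]
      calc ∑ W ∈ Wfam n s t, cnt (EAll pol s W) * Q ^ K
          ≤ ∑ _W ∈ Wfam n s t, D ^ K * Q :=
            Finset.sum_le_sum (fun W hW => card_EAll_le hn pol hW)
        _ = (Wfam n s t).card * (D ^ K * Q) := by rw [Finset.sum_const, smul_eq_mul]
    calc cnt Bad * Q ^ K
        ≤ ((∑ W ∈ Wfam n s t, cnt (EAll true s W))
            + (∑ W ∈ Wfam n s t, cnt (EAll false s W))) * Q ^ K :=
          Nat.mul_le_mul_right _ h1
      _ = (∑ W ∈ Wfam n s t, cnt (EAll true s W)) * Q ^ K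
          + (∑ W ∈ Wfam n s t, cnt (EAll false s W)) * Q ^ K := by ring
      _ ≤ (Wfam n s t).card * (D ^ K * Q) + (Wfam n s t).card * (D ^ K * Q) :=
          add_le_add (h2 true) (h2 false)
      _ = 2 * (Wfam n s t).card * (D ^ K * Q) := by ring
  -- conclude cnt Bad < Q
  have hlt : cnt Bad < Q := by
    by_contra hge
    push_neg at hge
    have hQpos : 0 < Q := by positivity
    have hNat : Q ^ K ≤ 2 * (Wfam n s t).card * D ^ K := by
      have step : Q * Q ^ K ≤ (2 * (Wfam n s t).card * D ^ K) * Q :=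
        le_trans (Nat.mul_le_mul_right _ hge) (by linarith [hcount])
      have step2 : Q ^ K * Q ≤ (2 * (Wfam n s t).card * D ^ K) * Q := by
        rwa [mul_comm] at step
      exact Nat.le_of_mul_le_mul_right step2 hQpos
    -- cast to ℝ
    have hcast : ((Q : ℕ) : ℝ) ^ K ≤ 2 * ((Wfam n s t).card : ℝ) * ((D : ℕ) : ℝ) ^ K := by
      exact_mod_cast hNat
    have hγ : ((D : ℕ) : ℝ) = (1 - ((2 : ℝ) ^ (2 * s * s))⁻¹) * ((Q : ℕ) : ℝ) := by
      have hle : (2 : ℕ) ^ (n * n - 2 * s * s) ≤ 2 ^ (n * n) :=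
        Nat.pow_le_pow_right (by norm_num) (by omega)
      rw [hD, hQ]
      push_cast [Nat.cast_sub hle]
      have hexp : (2 : ℝ) ^ (n * n - 2 * s * s) * (2 : ℝ) ^ (2 * s * s)
          = (2 : ℝ) ^ (n * n) := by
        rw [← pow_add]
        congr 1
        omega
      have h2pos : (0 : ℝ) < (2 : ℝ) ^ (2 * s * s) := by positivity
      field_simp
      linarith [hexp]
    have hγ0 : (0 : ℝ) ≤ 1 - ((2 : ℝ) ^ (2 * s * s))⁻¹ := by
      have : ((2 : ℝ) ^ (2 * s * s))⁻¹ ≤ 1 := by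
        rw [inv_le_one_iff₀]
        right
        exact one_le_pow₀ (by norm_num)
      linarith
    have hWc : ((Wfam n s t).card : ℝ) ≤ ((n : ℝ) + 1) ^ (s * t) := by
      have := Wfam_card_le n s t
      have hcast2 : ((Wfam n s t).card : ℝ) ≤ (((n + 1) ^ s) ^ t : ℕ) := by exact_mod_cast this
      refine le_trans hcast2 ?_
      rw [← pow_mul]
      push_cast
      exact le_rfl
    have hQr : (0 : ℝ) < ((Q : ℕ) : ℝ) ^ K := by positivity
    have final : ((Q : ℕ) : ℝ) ^ K < ((Q : ℕ) : ℝ) ^ K := by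
      calc ((Q : ℕ) : ℝ) ^ K ≤ 2 * ((Wfam n s t).card : ℝ) * ((D : ℕ) : ℝ) ^ K := hcast
        _ = 2 * ((Wfam n s t).card : ℝ)
            * ((1 - ((2 : ℝ) ^ (2 * s * s))⁻¹) ^ K * ((Q : ℕ) : ℝ) ^ K) := by
            rw [hγ, mul_pow]
        _ ≤ 2 * (((n : ℝ) + 1) ^ (s * t))
            * ((1 - ((2 : ℝ) ^ (2 * s * s))⁻¹) ^ K * ((Q : ℕ) : ℝ) ^ K) := by
            apply mul_le_mul_of_nonneg_right
            · apply mul_le_mul_of_nonneg_left hWc (by norm_num)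
            · positivity
        _ = (2 * (((n : ℝ) + 1) ^ (s * t)) * (1 - ((2 : ℝ) ^ (2 * s * s))⁻¹) ^ K)
            * ((Q : ℕ) : ℝ) ^ K := by ring
        _ < 1 * ((Q : ℕ) : ℝ) ^ K := by
            apply mul_lt_mul_of_pos_right hreal hQr
        _ = ((Q : ℕ) : ℝ) ^ K := by ring
    exact lt_irrefl _ final
  -- extract a good f
  have huniv : (Finset.univ : Finset ((Fin n × Fin n) → Bool)).card = Q := by
    rw [Finset.card_univ, Fintype.card_fun]
    simp [hQ]
  have hss : (@Finset.filter _ Bad (Classical.decPred Bad) Finset.univ)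
      ⊂ (Finset.univ : Finset ((Fin n × Fin n) → Bool)) := by
    rw [Finset.ssubset_iff_subset_ne]
    refine ⟨Finset.subset_univ _, fun hcon => ?_⟩
    have hlt' : (@Finset.filter _ Bad (Classical.decPred Bad) Finset.univ).card < Q := hlt
    rw [hcon, huniv] at hlt'
    exact lt_irrefl _ hlt'
  obtain ⟨f, -, hf⟩ := Finset.exists_of_ssubset hss
  refine ⟨graphOf f, ?_, ?_⟩
  · intro h
    exact hf (mem_cnt_filter.mpr (Or.inl h))
  · intro h
    exact hf (mem_cnt_filter.mpr (Or.inr h))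

end MainCount

section Blowup

variable {n r : ℕ} {G : SimpleGraph (Fin n)} {P : SimpleGraph (Fin n × Fin r)}

/-- Projection of a connected induced subgraph is connected. -/
lemma connected_image_fst
    (hP : ∀ x y, P.Adj x y → G.Adj x.1 y.1 ∨ x.1 = y.1)
    (A : Finset (Fin n × Fin r)) (hA : (P.induce (A : Set (Fin n × Fin r))).Connected) :
    (G.induce ((A.image Prod.fst : Finset (Fin n)) : Set (Fin n))).Connected := by
  classical
  set S : Finset (Fin n) := A.image Prod.fst with hS
  have hmem : ∀ x : Fin n × Fin r, x ∈ A → x.1 ∈ S := by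
    intro x hx; exact Finset.mem_image_of_mem _ hx
  rw [SimpleGraph.connected_iff]
  refine ⟨?_, ?_⟩
  · -- preconnected
    rintro ⟨u, hu⟩ ⟨v, hv⟩
    obtain ⟨a, ha, rfl⟩ := Finset.mem_image.mp (by exact_mod_cast hu)
    obtain ⟨b, hb, rfl⟩ := Finset.mem_image.mp (by exact_mod_cast hv)
    have hreach := hA.preconnected ⟨a, by exact_mod_cast ha⟩ ⟨b, by exact_mod_cast hb⟩
    obtain ⟨w⟩ := hreach
    -- induction on the walk
    suffices H : ∀ (x y : ↑(A : Set (Fin n × Fin r))),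
        (P.induce (A : Set (Fin n × Fin r))).Walk x y →
        (G.induce ((S : Finset (Fin n)) : Set (Fin n))).Reachable
          ⟨(x : Fin n × Fin r).1, by exact_mod_cast hmem _ (by exact_mod_cast x.2)⟩
          ⟨(y : Fin n × Fin r).1, by exact_mod_cast hmem _ (by exact_mod_cast y.2)⟩ by
      exact H _ _ w
    intro x y w
    induction w with
    | nil => exact SimpleGraph.Reachable.refl _
    | @cons x' z' y' h p ih =>
      have hadj : P.Adj (x' : Fin n × Fin r) (z' : Fin n × Fin r) := h
      rcases hP _ _ hadj with hGadj | heq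
      · refine SimpleGraph.Reachable.trans ?_ ih
        apply SimpleGraph.Adj.reachable
        exact hGadj
      · have : (⟨(x' : Fin n × Fin r).1, by exact_mod_cast hmem _ (by exact_mod_cast x'.2)⟩ :
            ↑((S : Finset (Fin n)) : Set (Fin n))) =
            ⟨(z' : Fin n × Fin r).1, by exact_mod_cast hmem _ (by exact_mod_cast z'.2)⟩ :=
          Subtype.ext heq
        rw [this]
        exact ih
  · -- nonempty
    obtain ⟨⟨x, hx⟩⟩ := hA.nonempty
    exact ⟨⟨x.1, by exact_mod_cast hmem x (by exact_mod_cast hx)⟩⟩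

lemma cliqueMinor_le_mul_fracHadwiger (hr : 0 < r)
    (hP : ∀ x y, P.Adj x y → G.Adj x.1 y.1 ∨ x.1 = y.1)
    {t : ℕ} (hm : HasCliqueMinor P t) :
    (t : ℝ) ≤ (r : ℝ) * fracHadwiger G := by
  obtain ⟨f, hne, hconn, hdisj, hadj⟩ := hm
  set π : Fin t → Finset (Fin n) := fun i => (f i).image Prod.fst with hπ
  set B : Finset (Finset (Fin n)) := Finset.image π Finset.univ with hB
  set w : Finset (Fin n) → ℝ :=
    fun S => ((Finset.univ.filter (fun i => π i = S)).card : ℝ) / r with hw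
  have hBmem : ∀ S ∈ B, ∃ i, π i = S := by
    intro S hS
    obtain ⟨i, _, hi⟩ := Finset.mem_image.mp hS
    exact ⟨i, hi⟩
  have hBramble : IsBramble G B := by
    constructor
    · intro S hS
      obtain ⟨i, rfl⟩ := hBmem S hS
      exact connected_image_fst hP (f i) (hconn i)
    · intro S hS S' hS'
      obtain ⟨i, rfl⟩ := hBmem S hS
      obtain ⟨j, rfl⟩ := hBmem S' hS'
      by_cases hij : i = j
      · subst hij
        left
        obtain ⟨x, hx⟩ := hne i
        exact ⟨x.1, Finset.mem_image_of_mem _ hx, Finset.mem_image_of_mem _ hx⟩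
      · obtain ⟨a, ha, b, hb, hab⟩ := hadj i j hij
        rcases hP _ _ hab with hGadj | heq
        · right
          exact ⟨a.1, Finset.mem_image_of_mem _ ha, b.1, Finset.mem_image_of_mem _ hb, hGadj⟩
        · left
          exact ⟨a.1, Finset.mem_image_of_mem _ ha, heq ▸ Finset.mem_image_of_mem _ hb⟩
  -- fibers over a vertex: at most r indices project through v
  have hfiber : ∀ v : Fin n, (Finset.univ.filter (fun i => v ∈ π i)).card ≤ r := by
    intro v
    -- injective map into Fin r: pick second coordinate of a member of f i in the fiber
    have hchoice : ∀ i ∈ Finset.univ.filter (fun i => v ∈ π i),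
        ∃ c : Fin r, (v, c) ∈ f i := by
      intro i hi
      rw [Finset.mem_filter] at hi
      obtain ⟨x, hx, hx1⟩ := Finset.mem_image.mp hi.2
      exact ⟨x.2, by rwa [show (v, x.2) = x from Prod.ext hx1.symm rfl]⟩
    choose c hc using hchoice
    have hinj : ∀ i hi j hj, c i hi = c j hj → i = j := by
      intro i hi j hj hcc
      by_contra hij
      have h1 := hc i hi
      have h2 := hc j hj
      rw [hcc] at h1
      exact Finset.disjoint_left.mp (hdisj i j hij) h1 h2
    have hcard := Fintype.card_le_of_injective
      (fun x : {i // i ∈ Finset.univ.filter (fun i => v ∈ π i)} => c x.1 x.2)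
      (fun x y h => Subtype.ext (hinj _ _ _ _ h))
    rw [Fintype.card_coe] at hcard
    simpa using hcard
  have hValid : IsValidWeight B w := by
    constructor
    · intro A _; positivity
    · intro v
      have hmap : ∀ i ∈ Finset.univ.filter (fun i => v ∈ π i),
          π i ∈ B.filter (fun S => v ∈ S) := by
        intro i hi
        rw [Finset.mem_filter] at hi ⊢
        exact ⟨Finset.mem_image_of_mem _ (Finset.mem_univ i), hi.2⟩
      have h0 := Finset.card_eq_sum_card_fiberwise hmap
      have key : ∑ S ∈ B.filter (fun S => v ∈ S), w S =
          ((Finset.univ.filter (fun i => v ∈ π i)).card : ℝ) / r := by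
        rw [h0, Nat.cast_sum, Finset.sum_div]
        apply Finset.sum_congr rfl
        intro S hS
        rw [hw]
        have hset : filter (fun a => π a = S) (filter (fun i => v ∈ π i) univ)
            = filter (fun i => π i = S) univ := by
          ext i
          simp only [Finset.mem_filter, Finset.mem_univ, true_and]
          exact ⟨fun h => h.2, fun h => ⟨h ▸ (Finset.mem_filter.mp hS).2, h⟩⟩
        rw [hset]
      rw [key]
      rw [div_le_one (by exact_mod_cast hr)]
      exact_mod_cast hfiber v
  have hsum : ∑ S ∈ B, w S = (t : ℝ) / r := by
    have h0 := Finset.card_eq_sum_card_fiberwise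
      (f := π) (s := (Finset.univ : Finset (Fin t))) (t := B)
      (fun i _ => Finset.mem_image_of_mem _ (Finset.mem_univ i))
    calc ∑ S ∈ B, w S
        = (∑ S ∈ B, ((Finset.univ.filter (fun i => π i = S)).card : ℝ)) / r := by
          rw [Finset.sum_div]
      _ = ((∑ S ∈ B, (Finset.univ.filter (fun i => π i = S)).card : ℕ) : ℝ) / r := by
          rw [Nat.cast_sum]
      _ = (t : ℝ) / r := by rw [← h0]; simp
  have hmem : (t : ℝ) / r ∈ {h : ℝ | ∃ B : Finset (Finset (Fin n)), ∃ w : Finset (Fin n) → ℝ,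
      IsBramble G B ∧ IsValidWeight B w ∧ h = ∑ A ∈ B, w A} :=
    ⟨B, w, hBramble, hValid, hsum.symm⟩
  have hle : (t : ℝ) / r ≤ fracHadwiger G := le_csSup (fracHadwiger_bddAbove G) hmem
  rw [div_le_iff₀ (by exact_mod_cast hr)] at hle
  linarith [hle]

end Blowup

lemma numeric_choice (ε : ℝ) (hε0 : 0 < ε) (hε1 : ε < 1) :
    ∃ s n t : ℕ, 1 ≤ s ∧ 1 ≤ n ∧ 1 ≤ t ∧ 2 * s * s ≤ n * n ∧
      (∀ K : ℕ, 2 * K = t * t - t →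
        2 * (((n : ℝ) + 1) ^ (s * t)) * (1 - ((2 : ℝ) ^ (2 * s * s))⁻¹) ^ K < 1) ∧
      (s : ℝ) * ((t : ℝ) - 1) + (n : ℝ) / ((s : ℝ) + 1) ≤ ε * n := by
  set s : ℕ := ⌈2 / ε⌉₊ with hs
  have hs2 : (2 : ℝ) / ε ≤ s := Nat.le_ceil _
  have hs1 : 1 ≤ s := by
    rw [hs, Nat.one_le_ceil_iff]
    positivity
  have hsR : (1 : ℝ) ≤ (s : ℝ) := by exact_mod_cast hs1
  clear_value s
  set γ : ℝ := ((2 : ℝ) ^ (2 * s * s))⁻¹ with hγ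
  have hγpos : 0 < γ := by positivity
  have hγle : γ ≤ 1 := by
    rw [hγ, inv_le_one_iff₀]
    right
    exact one_le_pow₀ (by norm_num)
  set c : ℝ := ε / (2 * s) with hc
  have hcpos : 0 < c := by positivity
  set N : ℕ := ⌈12 * (s : ℝ) / (γ * c)⌉₊ + ⌈4 / c⌉₊ + 2 * s + 1 with hN
  have hN1 : 12 * (s : ℝ) / (γ * c) < N := by
    have h1 : 12 * (s : ℝ) / (γ * c) ≤ ⌈12 * (s : ℝ) / (γ * c)⌉₊ := Nat.le_ceil _
    have h2 : (⌈12 * (s : ℝ) / (γ * c)⌉₊ : ℝ) < N := by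
      rw [hN]
      push_cast
      have : (0 : ℝ) ≤ ⌈4 / c⌉₊ := by positivity
      nlinarith [hsR]
    linarith
  have hN2 : 4 / c ≤ N := by
    have h1 : 4 / c ≤ ⌈4 / c⌉₊ := Nat.le_ceil _
    have h2 : (⌈4 / c⌉₊ : ℝ) ≤ N := by
      rw [hN]; push_cast
      have : (0 : ℝ) ≤ ⌈12 * (s : ℝ) / (γ * c)⌉₊ := by positivity
      nlinarith [hsR]
    linarith
  have hN3 : 2 * s + 1 ≤ N := by omega
  have hNpos : 0 < N := by omega
  clear_value N
  have hNR : (1 : ℝ) ≤ (N : ℝ) := by exact_mod_cast hNpos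
  set n : ℕ := N * N with hn
  have hn1 : 1 ≤ n := Nat.one_le_iff_ne_zero.mpr (by positivity)
  have hnR : (n : ℝ) = (N : ℝ) * N := by rw [hn]; push_cast; ring
  have hnpos : (0 : ℝ) < n := by
    rw [hnR]; nlinarith
  clear_value n
  set t : ℕ := ⌊c * n⌋₊ with ht
  have hcn4 : 4 ≤ c * n := by
    have h1 : 4 ≤ c * N := by
      have := mul_le_mul_of_nonneg_left hN2 (le_of_lt hcpos)
      rw [mul_div_cancel₀] at this
      · linarith
      · exact ne_of_gt hcpos
    calc (4 : ℝ) ≤ c * N := h1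
      _ ≤ c * N * N := by nlinarith [hcpos, hNR]
      _ = c * n := by rw [hnR]; ring
  have ht_up : (t : ℝ) ≤ c * n := Nat.floor_le (by positivity)
  have ht_low : c * n - 1 < t := Nat.sub_one_lt_floor _
  have ht1 : 1 ≤ t := by
    rw [ht, Nat.le_floor_iff (by positivity)]
    push_cast
    linarith
  have htR : (1 : ℝ) ≤ (t : ℝ) := by exact_mod_cast ht1
  clear_value t
  refine ⟨s, n, t, hs1, hn1, ht1, ?_, ?_, ?_⟩
  · -- 2 s² ≤ n²
    have h2s : 2 * s ≤ n := by
      calc 2 * s ≤ N := by omega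
        _ ≤ N * N := Nat.le_mul_of_pos_left N hNpos
        _ = n := hn.symm
    calc 2 * s * s ≤ (2 * s) * (2 * s) := by nlinarith
      _ ≤ n * n := Nat.mul_le_mul h2s h2s
  · -- the probabilistic inequality
    intro K hK
    have hKR : 2 * (K : ℝ) = (t : ℝ) * t - t := by
      have h1 : t ≤ t * t := Nat.le_mul_of_pos_left t (by omega)
      have := hK
      zify [h1] at this
      exact_mod_cast this
    -- main log inequality
    have hlog2 : Real.log 2 ≤ 1 := by
      have := Real.log_le_sub_one_of_pos (show (0:ℝ) < 2 by norm_num)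
      linarith
    have hlogn : Real.log ((n : ℝ) + 1) ≤ 2 * N := by
      have h1 : (n : ℝ) + 1 ≤ ((N : ℝ) + 1) ^ 2 := by
        rw [hnR]; nlinarith
      have h2 : Real.log ((n : ℝ) + 1) ≤ Real.log (((N : ℝ) + 1) ^ 2) :=
        Real.log_le_log (by positivity) h1
      have h3 : Real.log (((N : ℝ) + 1) ^ 2) = 2 * Real.log ((N : ℝ) + 1) := by
        rw [Real.log_pow]; push_cast; ring
      have h4 : Real.log ((N : ℝ) + 1) ≤ N := by
        have := Real.log_le_sub_one_of_pos (show (0:ℝ) < (N : ℝ) + 1 by positivity)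
        linarith
      linarith
    have hlogn0 : 0 ≤ Real.log ((n : ℝ) + 1) := Real.log_nonneg (by linarith)
    have hmain : Real.log 2 + (s : ℝ) * t * Real.log ((n : ℝ) + 1) < γ * K := by
      have step1 : Real.log 2 + (s : ℝ) * Real.log ((n : ℝ) + 1) < γ * c * n / 4 := by
        have lhs_le : Real.log 2 + (s : ℝ) * Real.log ((n : ℝ) + 1)
            ≤ 1 + (s : ℝ) * (2 * N) := by
          have := mul_le_mul_of_nonneg_left hlogn (show (0:ℝ) ≤ s by positivity)
          linarith
        have h3sN : 1 + (s : ℝ) * (2 * N) ≤ 3 * s * N := by nlinarith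
        have hrhs : 3 * (s : ℝ) * N < γ * c * n / 4 := by
          have hgc : 0 < γ * c := by positivity
          rw [hnR]
          rw [div_lt_iff₀ hgc] at hN1
          nlinarith [hNR, hgc]
        linarith
      have step2 : γ * c * (n : ℝ) / 4 * t ≤ γ * ((t : ℝ) * (t - 1)) / 2 := by
        have htm1 : c * n / 2 ≤ (t : ℝ) - 1 := by linarith
        have := mul_le_mul_of_nonneg_left htm1 (show (0:ℝ) ≤ γ * t by positivity)
        nlinarith [hγpos, htR]
      have step3 : γ * ((t : ℝ) * (t - 1)) / 2 = γ * K := by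
        rw [show (t : ℝ) * (t - 1) = (t : ℝ) * t - t by ring, ← hKR]
        ring
      calc Real.log 2 + (s : ℝ) * t * Real.log ((n : ℝ) + 1)
          ≤ (Real.log 2 + (s : ℝ) * Real.log ((n : ℝ) + 1)) * t := by nlinarith [hlogn0, htR, Real.log_pos (show (1:ℝ) < 2 by norm_num)]
        _ < (γ * c * n / 4) * t := by
            apply mul_lt_mul_of_pos_right step1 (by linarith)
        _ ≤ γ * ((t : ℝ) * (t - 1)) / 2 := by
            calc (γ * c * n / 4) * t = γ * c * (n : ℝ) / 4 * t := by ring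
              _ ≤ _ := step2
        _ = γ * K := step3
    -- convert to the product inequality
    have hpow_pos : (0 : ℝ) < ((n : ℝ) + 1) ^ (s * t) := by positivity
    have hexp2 : 2 * (((n : ℝ) + 1) ^ (s * t)) < Real.exp (γ * K) := by
      have hL : (0 : ℝ) < 2 * (((n : ℝ) + 1) ^ (s * t)) := by positivity
      have hlogL : Real.log (2 * (((n : ℝ) + 1) ^ (s * t)))
          = Real.log 2 + (s : ℝ) * t * Real.log ((n : ℝ) + 1) := by
        rw [Real.log_mul (by norm_num) (by positivity), Real.log_pow]
        push_cast
        ring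
      calc 2 * (((n : ℝ) + 1) ^ (s * t))
          = Real.exp (Real.log (2 * (((n : ℝ) + 1) ^ (s * t)))) := (Real.exp_log hL).symm
        _ < Real.exp (γ * K) := by
            apply Real.exp_lt_exp.mpr
            rw [hlogL]
            exact hmain
    have hfac : (1 - γ) ^ K ≤ Real.exp (-(γ * K)) := by
      have h1 : 1 - γ ≤ Real.exp (-γ) := by
        have := Real.add_one_le_exp (-γ)
        linarith
      have h2 : (1 - γ) ^ K ≤ (Real.exp (-γ)) ^ K :=
        pow_le_pow_left₀ (by linarith) h1 K
      have h3 : (Real.exp (-γ)) ^ K = Real.exp (-(γ * K)) := by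
        rw [← Real.exp_nat_mul]
        congr 1
        ring
      linarith
    have hfin : 2 * (((n : ℝ) + 1) ^ (s * t)) * (1 - γ) ^ K
        < Real.exp (γ * K) * Real.exp (-(γ * K)) := by
      have hexp_pos : (0 : ℝ) < Real.exp (-(γ * K)) := Real.exp_pos _
      calc 2 * (((n : ℝ) + 1) ^ (s * t)) * (1 - γ) ^ K
          ≤ 2 * (((n : ℝ) + 1) ^ (s * t)) * Real.exp (-(γ * K)) := by
            apply mul_le_mul_of_nonneg_left hfac (by positivity)
        _ < Real.exp (γ * K) * Real.exp (-(γ * K)) :=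
            mul_lt_mul_of_pos_right hexp2 hexp_pos
    rw [← Real.exp_add] at hfin
    simpa using hfin
  · -- the linear bound
    have hst : (s : ℝ) * t ≤ ε * n / 2 := by
      have hsc : (s : ℝ) * c = ε / 2 := by
        rw [hc]
        field_simp
      calc (s : ℝ) * t ≤ (s : ℝ) * (c * n) := by
            apply mul_le_mul_of_nonneg_left ht_up (by positivity)
        _ = ((s : ℝ) * c) * n := by ring
        _ = ε / 2 * n := by rw [hsc]
        _ = ε * n / 2 := by ring
    have h1 : (s : ℝ) * ((t : ℝ) - 1) ≤ ε * n / 2 := by nlinarith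
    have h2 : (n : ℝ) / ((s : ℝ) + 1) ≤ ε * n / 2 := by
      have hb : (0 : ℝ) < 2 / ε := by positivity
      have hbc : 2 / ε ≤ (s : ℝ) + 1 := by linarith
      calc (n : ℝ) / ((s : ℝ) + 1) ≤ (n : ℝ) / (2 / ε) :=
            div_le_div_of_nonneg_left (by positivity) hb hbc
        _ = (n : ℝ) * ε / 2 := by
            rw [div_div_eq_mul_div]
        _ = ε * n / 2 := by ring
    linarith


section Glue

lemma hasCliqueMinor_zero {V : Type} (P : SimpleGraph V) : HasCliqueMinor P 0 :=
  ⟨Fin.elim0, fun i => i.elim0, fun i => i.elim0, fun i => i.elim0, fun i => i.elim0⟩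

lemma hasCliqueMinor_le_card {V : Type} [Fintype V] [DecidableEq V] (P : SimpleGraph V) {t : ℕ}
    (h : HasCliqueMinor P t) : t ≤ Fintype.card V := by
  obtain ⟨f, hne, -, hdisj, -⟩ := h
  choose x hx using hne
  have hinj : Function.Injective x := by
    intro i j hij
    by_contra hne'
    exact Finset.disjoint_left.mp (hdisj i j hne') (hx i) (hij ▸ hx j)
  calc t = Fintype.card (Fin t) := (Fintype.card_fin t).symm
    _ ≤ Fintype.card V := Fintype.card_le_of_injective x hinj

lemma hadwigerNumber_le_of_proj {n r : ℕ} (hr : 0 < r) {G : SimpleGraph (Fin n)}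
    {P : SimpleGraph (Fin n × Fin r)}
    (hP : ∀ x y, P.Adj x y → G.Adj x.1 y.1 ∨ x.1 = y.1) :
    (hadwigerNumber P : ℝ) ≤ (r : ℝ) * fracHadwiger G := by
  classical
  have hne : {t : ℕ | HasCliqueMinor P t}.Nonempty := ⟨0, hasCliqueMinor_zero P⟩
  have hbdd : BddAbove {t : ℕ | HasCliqueMinor P t} :=
    ⟨Fintype.card (Fin n × Fin r), fun t ht => hasCliqueMinor_le_card P ht⟩
  have hmem : HasCliqueMinor P (hadwigerNumber P) := Nat.sSup_mem hne hbdd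
  exact cliqueMinor_le_mul_fracHadwiger hr hP hmem

end Glue


/-- for every `0 < ε < 1` there is a graph `G` on some `n₀ ≥ 1` vertices with
`h_f(G) ≤ ε·n₀` and `h_f(Ḡ) ≤ ε·n₀`; consequently every complete blow-up of `G` and its
complement have Hadwiger number at most `ε·r·n₀`. -/
theorem exists_graph_small_fracHadwiger_self_and_compl
    (ε : ℝ) (hε0 : 0 < ε) (hε1 : ε < 1) :
    ∃ n₀ : ℕ, 1 ≤ n₀ ∧ ∃ G : SimpleGraph (Fin n₀),
      fracHadwiger G ≤ ε * (n₀ : ℝ) ∧ fracHadwiger Gᶜ ≤ ε * (n₀ : ℝ) ∧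
      ∀ r : ℕ, 0 < r →
        (hadwigerNumber (completeBlowup G r) : ℝ) ≤ ε * (r : ℝ) * (n₀ : ℝ) ∧
        (hadwigerNumber ((completeBlowup G r)ᶜ) : ℝ) ≤ ε * (r : ℝ) * (n₀ : ℝ) := by
  classical
  obtain ⟨s, n, t, hs1, hn1, ht1, hss, hprob, hlin⟩ := numeric_choice ε hε0 hε1
  have hreal := hprob (pairsF t).card (pairsF_card t)
  obtain ⟨G, hG, hGc⟩ := exists_no_bad n s t hss hreal
  have hcard : Fintype.card (Fin n) = n := Fintype.card_fin n
  have hfH : fracHadwiger G ≤ ε * (n : ℝ) := by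
    have h := fracHadwiger_le_of_no_bad ht1 hG
    rw [hcard] at h
    linarith
  have hfHc : fracHadwiger Gᶜ ≤ ε * (n : ℝ) := by
    have h := fracHadwiger_le_of_no_bad ht1 hGc
    rw [hcard] at h
    linarith
  refine ⟨n, hn1, G, hfH, hfHc, ?_⟩
  intro r hr
  have hrR : (0 : ℝ) ≤ (r : ℝ) := by positivity
  constructor
  · have hb : ∀ x y, (completeBlowup G r).Adj x y → G.Adj x.1 y.1 ∨ x.1 = y.1 := by
      rintro x y (h | ⟨h, -⟩)
      · exact Or.inl h
      · exact Or.inr h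
    calc (hadwigerNumber (completeBlowup G r) : ℝ)
        ≤ (r : ℝ) * fracHadwiger G := hadwigerNumber_le_of_proj hr hb
      _ ≤ (r : ℝ) * (ε * (n : ℝ)) := mul_le_mul_of_nonneg_left hfH hrR
      _ = ε * (r : ℝ) * (n : ℝ) := by ring
  · have hb : ∀ x y, ((completeBlowup G r)ᶜ).Adj x y → Gᶜ.Adj x.1 y.1 ∨ x.1 = y.1 := by
      intro x y h
      rw [SimpleGraph.compl_adj] at h
      obtain ⟨hne, hnadj⟩ := h
      by_cases he : x.1 = y.1
      · exact Or.inr he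
      · refine Or.inl ⟨he, fun hGadj => hnadj (Or.inl hGadj)⟩
    calc (hadwigerNumber ((completeBlowup G r)ᶜ) : ℝ)
        ≤ (r : ℝ) * fracHadwiger Gᶜ := hadwigerNumber_le_of_proj hr hb
      _ ≤ (r : ℝ) * (ε * (n : ℝ)) := mul_le_mul_of_nonneg_left hfHc hrR
      _ = ε * (r : ℝ) * (n : ℝ) := by ring
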